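/- Suppose that for some ε > 0 there exists a bounded set E_ε ⊆ ℝⁿ such that Opt_ε ⊆ E_ε + S, where Opt_ε := {x ∈ Q : f(x) ≤ f* + ε} and S := {d ∈ ℝⁿ : x + θd ∈ Q and f(x + θd) ≤ f* + ε for all x ∈ Opt_ε and all θ ≥ 0} is the recession cone of Opt_ε. Then for any strict lower bound f_slb < f*, the growth constant is finite: there exists a finite scalar Ḡ ≥ 0 such that Dist(x, Opt) ≤ Ḡ·(f(x) − f_slb) for all x ∈ Q. -/

import Mathlib

open scoped Pointwise

/-- Theorem: finiteness of the growth constant `G`.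
If for some `ε > 0` the `ε`-optimal level set `Opt_ε` is contained in `E_ε + S` for a bounded
set `E_ε`, where `S` is the recession cone of `Opt_ε`, then for any strict lower bound
`f_slb < f*` there is a finite `Ḡ ≥ 0` with `Dist(x, Opt) ≤ Ḡ (f x − f_slb)` for all `x ∈ Q`. -/
theorem growth_constant_finite {n : ℕ} (Q : Set (EuclideanSpace ℝ (Fin n)))
    (hQne : Q.Nonempty) (hQcl : IsClosed Q) (hQcv : Convex ℝ Q)
    (f : EuclideanSpace ℝ (Fin n) → ℝ) (hfc : ConvexOn ℝ Q f)
    (fstar : ℝ) (hattain : ∃ z ∈ Q, f z = fstar) (hmin : ∀ z ∈ Q, fstar ≤ f z)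
    (fslb : ℝ) (hslb : fslb < fstar)
    (ε : ℝ) (hε : 0 < ε)
    (Eε : Set (EuclideanSpace ℝ (Fin n))) (hEbdd : Bornology.IsBounded Eε)
    (hsub : {z ∈ Q | f z ≤ fstar + ε} ⊆
      Eε + {d : EuclideanSpace ℝ (Fin n) |
        ∀ z ∈ {w ∈ Q | f w ≤ fstar + ε}, ∀ θ : ℝ, 0 ≤ θ →
          z + θ • d ∈ Q ∧ f (z + θ • d) ≤ fstar + ε}) :
    ∃ Gbar : ℝ, 0 ≤ Gbar ∧
      ∀ x ∈ Q, Metric.infDist x {z ∈ Q | f z = fstar} ≤ Gbar * (f x - fslb) := by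
  obtain ⟨z0, hz0Q, hz0f⟩ := hattain
  set Opt := {z ∈ Q | f z = fstar} with hOptdef
  have hz0Opt : z0 ∈ Opt := ⟨hz0Q, hz0f⟩
  have hOptne : Opt.Nonempty := ⟨z0, hz0Opt⟩
  obtain ⟨M, hM⟩ := isBounded_iff_forall_norm_le.mp hEbdd
  set C : ℝ := max M 0 + ‖z0‖ with hCdef
  have hC0 : 0 ≤ C := add_nonneg (le_max_right _ _) (norm_nonneg _)
  -- Lemma A : ε-optimal points are within distance C of Opt
  have lemA : ∀ x ∈ Q, f x ≤ fstar + ε → Metric.infDist x Opt ≤ C := by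
    intro x hxQ hxf
    obtain ⟨e, he, d, hd, hed⟩ := hsub ⟨hxQ, hxf⟩
    have hz0ε : z0 ∈ {w ∈ Q | f w ≤ fstar + ε} := ⟨hz0Q, by linarith⟩
    obtain ⟨hmem1, hle1⟩ := hd z0 hz0ε 1 zero_le_one
    have key : f (z0 + (1:ℝ) • d) = fstar := by
      by_contra hne
      have hgt : fstar < f (z0 + (1:ℝ) • d) :=
        lt_of_le_of_ne (hmin _ hmem1) (Ne.symm hne)
      set δ := f (z0 + (1:ℝ) • d) - fstar with hδdef
      have hδ0 : 0 < δ := by linarith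
      set θ : ℝ := max 1 (2 * ε / δ) with hθdef
      have hθ1 : (1:ℝ) ≤ θ := le_max_left _ _
      have hθ0 : (0:ℝ) < θ := lt_of_lt_of_le one_pos hθ1
      obtain ⟨hmemθ, hleθ⟩ := hd z0 hz0ε θ (le_of_lt hθ0)
      have hcomb : z0 + (1:ℝ) • d = (1 - 1/θ) • z0 + (1/θ) • (z0 + θ • d) := by
        match_scalars <;> field_simp <;> ring
      have h1θle : 1/θ ≤ 1 := by rw [div_le_one hθ0]; exact hθ1
      have hconv := hfc.2 hz0Q hmemθ (show (0:ℝ) ≤ 1 - 1/θ by linarith)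
        (show (0:ℝ) ≤ 1/θ by positivity) (show (1 - 1/θ) + 1/θ = 1 by ring)
      simp only [smul_eq_mul] at hconv
      rw [← hcomb] at hconv
      have hθδ : 2 * ε ≤ θ * δ := by
        have h2 : 2 * ε / δ ≤ θ := le_max_right _ _
        calc 2 * ε = (2 * ε / δ) * δ := by field_simp
        _ ≤ θ * δ := by nlinarith
      have hchain : f (z0 + (1:ℝ) • d) ≤ fstar + ε / θ := by
        have hstep : (1/θ) * f (z0 + θ • d) ≤ (1/θ) * (fstar + ε) :=
          mul_le_mul_of_nonneg_left hleθ (by positivity)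
        have hexp : (1 - 1/θ) * fstar + (1/θ) * (fstar + ε) = fstar + ε / θ := by
          ring
        have : (1 - 1/θ) * f z0 + (1/θ) * f (z0 + θ • d) ≤ fstar + ε / θ := by
          rw [hz0f]; linarith
        linarith
      have : ε / θ < δ := by
        rw [div_lt_iff₀ hθ0]
        nlinarith
      linarith [hchain, hδ0]
    have hmemOpt : z0 + (1:ℝ) • d ∈ Opt := ⟨hmem1, key⟩
    have hle := Metric.infDist_le_dist_of_mem (x := x) hmemOpt
    have hdist : dist x (z0 + (1:ℝ) • d) = ‖e - z0‖ := by
      rw [dist_eq_norm, ← hed, one_smul]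
      congr 1
      beta_reduce
      abel
    calc Metric.infDist x Opt ≤ dist x (z0 + (1:ℝ) • d) := hle
    _ = ‖e - z0‖ := hdist
    _ ≤ ‖e‖ + ‖z0‖ := norm_sub_le _ _
    _ ≤ max M 0 + ‖z0‖ := by
        have := hM e he
        have : ‖e‖ ≤ max M 0 := le_trans this (le_max_left _ _)
        linarith
  refine ⟨C / (fstar - fslb) + C / ε,
    add_nonneg (div_nonneg hC0 (by linarith)) (div_nonneg hC0 hε.le), ?_⟩
  intro x hxQ
  have hfx : fstar ≤ f x := hmin x hxQ
  have hfxslb : 0 < f x - fslb := by linarith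
  set D := Metric.infDist x Opt with hDdef
  have hD0 : 0 ≤ D := Metric.infDist_nonneg
  by_cases hcase : f x ≤ fstar + ε
  · have h1 : D ≤ C := lemA x hxQ hcase
    have h2 : C ≤ C / (fstar - fslb) * (f x - fslb) := by
      rw [div_mul_eq_mul_div, le_div_iff₀ (by linarith)]
      exact mul_le_mul_of_nonneg_left (by linarith) hC0
    have h3 : 0 ≤ C / ε * (f x - fslb) := by positivity
    have hexp : (C / (fstar - fslb) + C / ε) * (f x - fslb)
        = C / (fstar - fslb) * (f x - fslb) + C / ε * (f x - fslb) := by ring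
    linarith
  · push_neg at hcase
    set t : ℝ := ε / (f x - fstar) with htdef
    have htpos : 0 < t := by
      apply div_pos hε; linarith
    have ht1 : t < 1 := by
      rw [div_lt_one (by linarith)]; linarith
    have key : ∀ δ : ℝ, 0 < δ → t * D ≤ C + 2 * δ := by
      intro δ hδ
      obtain ⟨p, hpOpt, hdp⟩ := (Metric.infDist_lt_iff hOptne).mp
        (show Metric.infDist x Opt < D + δ by rw [← hDdef]; linarith)
      set y := (1 - t) • p + t • x with hydef
      have hyQ : y ∈ Q := hQcv hpOpt.1 hxQ (by linarith) (le_of_lt htpos) (by ring)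
      have hyf : f y ≤ fstar + ε := by
        have hconv := hfc.2 hpOpt.1 hxQ (show (0:ℝ) ≤ 1 - t by linarith)
          (le_of_lt htpos) (show (1 - t) + t = 1 by ring)
        simp only [smul_eq_mul] at hconv
        have htε : t * (f x - fstar) = ε := by
          rw [htdef]; exact div_mul_cancel₀ ε (by linarith)
        rw [hpOpt.2] at hconv
        have hexp : (1 - t) * fstar + t * f x = fstar + t * (f x - fstar) := by ring
        rw [hydef]
        linarith
      have h2 : Metric.infDist y Opt ≤ C := lemA y hyQ hyf
      obtain ⟨w, hwOpt, hdw⟩ := (Metric.infDist_lt_iff hOptne).mp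
        (show Metric.infDist y Opt < C + δ by linarith)
      have hDw : D ≤ dist x w := Metric.infDist_le_dist_of_mem hwOpt
      have hxy : dist x y = (1 - t) * dist x p := by
        rw [dist_eq_norm, dist_eq_norm]
        have : x - y = (1 - t) • (x - p) := by
          rw [hydef]; match_scalars <;> ring
        rw [this, norm_smul, Real.norm_eq_abs, abs_of_nonneg (by linarith)]
      have htri : dist x w ≤ dist x y + dist y w := dist_triangle _ _ _
      have e1 : dist x y ≤ (1 - t) * (D + δ) := by
        rw [hxy]
        exact mul_le_mul_of_nonneg_left hdp.le (by linarith)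
      have e2 : D ≤ (1 - t) * (D + δ) + (C + δ) := by linarith
      have e3 : (1 - t) * (D + δ) = D + δ - t * D - t * δ := by ring
      have e4 : 0 ≤ t * δ := mul_nonneg htpos.le hδ.le
      linarith
    have hkey2 : t * D ≤ C := by
      apply le_of_forall_pos_le_add
      intro δ hδ
      have := key (δ / 2) (by linarith)
      linarith
    have hDle : D ≤ C / ε * (f x - fstar) := by
      rw [htdef] at hkey2
      rw [div_mul_eq_mul_div, le_div_iff₀ hε]
      have hfs : 0 < f x - fstar := by linarith
      have hmul := mul_le_mul_of_nonneg_right hkey2 hfs.le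
      have hL : ε / (f x - fstar) * D * (f x - fstar) = ε * D := by
        field_simp
      rw [hL] at hmul
      linarith
    have h4 : C / ε * (f x - fstar) ≤ C / ε * (f x - fslb) := by
      apply mul_le_mul_of_nonneg_left (by linarith) (by positivity)
    have h5 : 0 ≤ C / (fstar - fslb) * (f x - fslb) :=
      mul_nonneg (div_nonneg hC0 (by linarith)) (by linarith)
    have hexp : (C / (fstar - fslb) + C / ε) * (f x - fslb)
        = C / (fstar - fslb) * (f x - fslb) + C / ε * (f x - fslb) := by ring
    linarith
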